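/- Let P_0, …, P_{2k−1} be finite sets each of cardinality ℓ such that |P_i △ P_j| ≥ 2ℓ − 2M for all i < j, and each P_i decomposes as a disjoint union P_i = P'_i ∪ P''_i. If Σ_{i<j} |P'_i ∩ P'_j| ≥ k(2k−2)M and Σ_{i<j} |P''_i ∩ P''_j| ≥ kM, then |P_i △ P_j| = 2ℓ − 2M for all i < j. -/
import Mathlib


theorem symmDiff_eq_of_counting {α : Type*} [DecidableEq α] (k M ℓ : ℕ) (hk : 1 ≤ k)
    (P P' P'' : Fin (2 * k) → Finset α)
    (hcard : ∀ i, (P i).card = ℓ)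
    (hdisj : ∀ i, Disjoint (P' i) (P'' i))
    (hunion : ∀ i, P i = P' i ∪ P'' i)
    (hint : ∀ i j, P i ∩ P j = (P' i ∩ P' j) ∪ (P'' i ∩ P'' j))
    (hfar : ∀ i j, i < j → 2 * ℓ - 2 * M ≤ (symmDiff (P i) (P j)).card)
    (h1 : k * (2 * k - 2) * M ≤
      ∑ i : Fin (2 * k), ∑ j : Fin (2 * k), if i < j then (P' i ∩ P' j).card else 0)
    (h2 : k * M ≤
      ∑ i : Fin (2 * k), ∑ j : Fin (2 * k), if i < j then (P'' i ∩ P'' j).card else 0) :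
    ∀ i j, i < j → (symmDiff (P i) (P j)).card = 2 * ℓ - 2 * M := by
  -- symmetric difference cardinality formula
  have hsd : ∀ i j : Fin (2 * k),
      (symmDiff (P i) (P j)).card = 2 * ℓ - 2 * (P i ∩ P j).card := by
    intro i j
    have h1' := Finset.card_sdiff_of_subset (Finset.inter_subset_union (s := P i) (t := P j))
    have h2' := Finset.card_union_add_card_inter (P i) (P j)
    have h3' : (P i ∩ P j).card ≤ (P i).card :=
      Finset.card_le_card Finset.inter_subset_left
    rw [hcard i, hcard j] at h2'
    rw [hcard i] at h3'
    rw [symmDiff_eq_sup_sdiff_inf]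
    simp only [Finset.sup_eq_union, Finset.inf_eq_inter]
    omega
  -- intersection cardinality at most ℓ
  have hle : ∀ i j : Fin (2 * k), (P i ∩ P j).card ≤ ℓ := by
    intro i j
    have h3' : (P i ∩ P j).card ≤ (P i).card :=
      Finset.card_le_card Finset.inter_subset_left
    rwa [hcard i] at h3'
  -- each pair intersection ≤ M
  have hM : ∀ i j : Fin (2 * k), i < j → (P i ∩ P j).card ≤ M := by
    intro i j hij
    have h := hfar i j hij
    rw [hsd i j] at h
    have := hle i j
    omega
  -- splitting the intersection
  have hsplit : ∀ i j : Fin (2 * k),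
      (P i ∩ P j).card = (P' i ∩ P' j).card + (P'' i ∩ P'' j).card := by
    intro i j
    rw [hint i j]
    exact Finset.card_union_of_disjoint <|
      Finset.disjoint_left.mpr fun a ha hb => (Finset.disjoint_left.mp (hdisj i))
        (Finset.mem_inter.mp ha).1 (Finset.mem_inter.mp hb).1
  -- total sum lower bound
  have hsum : k * (2 * k - 1) * M ≤
      ∑ i : Fin (2 * k), ∑ j : Fin (2 * k), if i < j then (P i ∩ P j).card else 0 := by
    have hEq : (∑ i : Fin (2 * k), ∑ j : Fin (2 * k), if i < j then (P i ∩ P j).card else 0)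
        = (∑ i : Fin (2 * k), ∑ j : Fin (2 * k), if i < j then (P' i ∩ P' j).card else 0)
        + (∑ i : Fin (2 * k), ∑ j : Fin (2 * k), if i < j then (P'' i ∩ P'' j).card else 0) := by
      rw [← Finset.sum_add_distrib]
      refine Finset.sum_congr rfl fun i _ => ?_
      rw [← Finset.sum_add_distrib]
      refine Finset.sum_congr rfl fun j _ => ?_
      split <;> simp [hsplit]
    have hk' : k * (2 * k - 1) * M = k * (2 * k - 2) * M + k * M := by
      have h : 2 * k - 1 = (2 * k - 2) + 1 := by omega
      rw [h]; ring
    omega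
  -- total sum upper bound: number of pairs is k*(2k-1)
  have hcount : (∑ i : Fin (2 * k), ∑ j : Fin (2 * k), if i < j then M else 0)
      = k * (2 * k - 1) * M := by
    rw [Finset.sum_comm]
    have hinner : ∀ j : Fin (2 * k),
        (∑ i : Fin (2 * k), if i < j then M else 0) = (j : ℕ) * M := by
      intro j
      rw [← Finset.sum_filter]
      have hfil : Finset.univ.filter (fun i : Fin (2 * k) => i < j) = Finset.Iio j := by
        ext x; simp
      rw [hfil]
      simp [Fin.card_Iio]
    simp only [hinner]
    rw [← Finset.sum_mul]
    congr 1
    rw [Fin.sum_univ_eq_sum_range (fun i => i)]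
    have hg := Finset.sum_range_id_mul_two (2 * k)
    have hr : k * (2 * k - 1) * 2 = 2 * k * (2 * k - 1) := by ring
    omega
  -- conclude each intersection equals M
  have hMeq : ∀ i j : Fin (2 * k), i < j → (P i ∩ P j).card = M := by
    intro i j hij
    by_contra hne
    have hlt : (P i ∩ P j).card < M := lt_of_le_of_ne (hM i j hij) hne
    have hstrict : (∑ i : Fin (2 * k), ∑ j : Fin (2 * k),
          if i < j then (P i ∩ P j).card else 0)
        < (∑ i : Fin (2 * k), ∑ j : Fin (2 * k), if i < j then M else 0) := by
      refine Finset.sum_lt_sum (fun a _ => Finset.sum_le_sum fun b _ => ?_)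
        ⟨i, Finset.mem_univ _, ?_⟩
      · split
        · exact hM a b (by assumption)
        · exact le_refl 0
      · refine Finset.sum_lt_sum (fun b _ => ?_) ⟨j, Finset.mem_univ _, ?_⟩
        · split
          · exact hM i b (by assumption)
          · exact le_refl 0
        · simpa [hij] using hlt
    omega
  intro i j hij
  rw [hsd i j, hMeq i j hij]
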